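/- For any arithmetic function f : ℕ → ℂ and positive integers m, r, s with m∣r and s∣r: ∑_{a=1, gcd(a,s)=1}^{r} f(gcd(a-1,m)) = r · ∑_{d∣m} ((μ∗f)(d)/d) · ∏_{p∣s, p∤d}(1 - 1/p). -/

import Mathlib

open Finset ArithmeticFunction


lemma count_icc {n r c : ℕ} (hn : 0 < n) (hnr : n ∣ r) (hc1 : 1 ≤ c) (hcn : c ≤ n) :
    ((Finset.Icc 1 r).filter (fun a => a % n = c % n)).card = r / n := by
  have himg : ((Finset.Icc 1 r).filter (fun a => a % n = c % n))
      = (Finset.range (r / n)).image (fun k => c + n * k) := by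
    ext a
    simp only [mem_filter, mem_Icc, mem_image, mem_range]
    constructor
    · rintro ⟨⟨ha1, har⟩, hmod⟩
      have hca : c ≤ a := by
        by_contra hlt
        push_neg at hlt
        have han : a < n := lt_of_lt_of_le hlt hcn
        rw [Nat.mod_eq_of_lt han] at hmod
        rcases lt_or_eq_of_le hcn with h | h
        · rw [Nat.mod_eq_of_lt h] at hmod; omega
        · subst h; simp [Nat.mod_self] at hmod; omega
      have hdvd : n ∣ a - c := (Nat.modEq_iff_dvd' hca).mp (Nat.ModEq.symm hmod)
      obtain ⟨k, hk⟩ := hdvd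
      refine ⟨k, ?_, by omega⟩
      have : n * k ≤ r - 1 := by omega
      have hrn : n * (r / n) = r := Nat.mul_div_cancel' hnr
      by_contra hge
      push_neg at hge
      have : n * (r / n) ≤ n * k := Nat.mul_le_mul_left n hge
      omega
    · rintro ⟨k, hk, rfl⟩
      have hrn : n * (r / n) = r := Nat.mul_div_cancel' hnr
      refine ⟨⟨by omega, by nlinarith⟩, ?_⟩
      simp [Nat.add_mul_mod_self_left]
  rw [himg, Finset.card_image_of_injective _ (fun x y hxy => Nat.eq_of_mul_eq_mul_left hn (Nat.add_left_cancel hxy)),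
    Finset.card_range]

lemma count_mod {n r : ℕ} (hn : 0 < n) (hnr : n ∣ r) (c : ℕ) :
    ((Finset.Icc 1 r).filter (fun a => a % n = c % n)).card = r / n := by
  set c' : ℕ := if c % n = 0 then n else c % n with hc'
  have hlt := Nat.mod_lt c hn
  have h1 : 1 ≤ c' := by simp only [hc']; split <;> omega
  have h2 : c' ≤ n := by simp only [hc']; split <;> omega
  have h3 : c' % n = c % n := by
    by_cases h : c % n = 0
    · simp [hc', h, Nat.mod_self]
    · rw [hc', if_neg h]
      exact Nat.mod_mod_of_dvd c dvd_rfl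
  rw [← h3]
  exact count_icc hn hnr h1 h2

lemma count_pair {d e r : ℕ} (hd : d ∣ r) (he : e ∣ r) (hd0 : 0 < d) (he0 : 0 < e)
    (hde : Nat.Coprime d e) :
    ((Finset.Icc 1 r).filter (fun a => d ∣ a - 1 ∧ e ∣ a)).card = r / (d * e) := by
  obtain ⟨c, hc1, hc0⟩ := Nat.chineseRemainder hde 1 0
  have hne : 0 < d * e := Nat.mul_pos hd0 he0
  have hder : d * e ∣ r := Nat.Coprime.mul_dvd_of_dvd_of_dvd hde hd he
  have hset : (Finset.Icc 1 r).filter (fun a => d ∣ a - 1 ∧ e ∣ a)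
      = (Finset.Icc 1 r).filter (fun a => a % (d * e) = c % (d * e)) := by
    apply Finset.filter_congr
    intro a ha
    rw [Finset.mem_Icc] at ha
    constructor
    · rintro ⟨h1, h2⟩
      have ha1 : a ≡ 1 [MOD d] := ((Nat.modEq_iff_dvd' ha.1).mpr h1).symm
      have ha2 : a ≡ 0 [MOD e] := Nat.modEq_zero_iff_dvd.mpr h2
      exact (Nat.modEq_and_modEq_iff_modEq_mul hde).mp
        ⟨ha1.trans hc1.symm, ha2.trans hc0.symm⟩
    · intro h
      have h : a ≡ c [MOD d * e] := h
      have h1 : a ≡ 1 [MOD d] := (h.of_mul_right e).trans hc1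
      have h2 : a ≡ 0 [MOD e] := (h.of_mul_left d).trans hc0
      exact ⟨(Nat.modEq_iff_dvd' ha.1).mp h1.symm, Nat.modEq_zero_iff_dvd.mp h2⟩
  rw [hset, count_mod hne hder]

lemma count_pair_zero {d e r : ℕ} (hde : ¬ Nat.Coprime d e) :
    ((Finset.Icc 1 r).filter (fun a => d ∣ a - 1 ∧ e ∣ a)).card = 0 := by
  rw [Finset.card_eq_zero, Finset.filter_eq_empty_iff]
  rintro a ha ⟨h1, h2⟩
  rw [Finset.mem_Icc] at ha
  apply hde
  have g1 : Nat.gcd d e ∣ a - 1 := dvd_trans (Nat.gcd_dvd_left d e) h1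
  have g2 : Nat.gcd d e ∣ a := dvd_trans (Nat.gcd_dvd_right d e) h2
  have : Nat.gcd d e ∣ 1 := by
    have := Nat.dvd_sub g2 g1
    rwa [Nat.sub_sub_self ha.1] at this
  exact Nat.eq_one_of_dvd_one this

noncomputable def hfun (d : ℕ) : ArithmeticFunction ℂ where
  toFun := fun e => if Nat.gcd e d = 1 then (moebius e : ℂ) / e else 0
  map_zero' := by simp

lemma hfun_apply (d e : ℕ) : hfun d e = if Nat.gcd e d = 1 then (moebius e : ℂ) / e else 0 := rfl

lemma hfun_mult (d : ℕ) : (hfun d).IsMultiplicative := by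
  constructor
  · simp [hfun_apply]
  · intro a b hab
    simp only [hfun_apply]
    have hiff : Nat.gcd (a * b) d = 1 ↔ (Nat.gcd a d = 1 ∧ Nat.gcd b d = 1) :=
      Nat.coprime_mul_iff_left
    simp only [hiff]
    by_cases h1 : Nat.Coprime a d
    · by_cases h2 : Nat.Coprime b d
      · rw [if_pos ⟨h1, h2⟩, if_pos h1, if_pos h2,
          isMultiplicative_moebius.map_mul_of_coprime hab]
        push_cast
        ring
      · rw [if_neg (by tauto), if_neg h2, mul_zero]
    · rw [if_neg (by tauto), if_neg h1, zero_mul]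

lemma key5 (d : ℕ) {s : ℕ} (hs : s ≠ 0) :
    ∑ e ∈ s.divisors, (if Nat.gcd e d = 1 then (moebius e : ℂ) / e else 0)
      = ∏ p ∈ s.primeFactors.filter (fun p => ¬ p ∣ d), (1 - 1 / (p : ℂ)) := by
  have hH : ((hfun d) * (zeta : ArithmeticFunction ℕ)) s
      = ∑ e ∈ s.divisors, (if Nat.gcd e d = 1 then (moebius e : ℂ) / e else 0) := by
    rw [coe_mul_zeta_apply]
    simp [hfun_apply]
  rw [← hH]
  have hmul : ((hfun d) * (zeta : ArithmeticFunction ℕ)).IsMultiplicative :=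
    (hfun_mult d).mul isMultiplicative_zeta.natCast
  rw [hmul.multiplicative_factorization _ hs, Finsupp.prod, Nat.support_factorization,
    Finset.prod_filter]
  apply Finset.prod_congr rfl
  intro p hp
  have hpp : p.Prime := Nat.prime_of_mem_primeFactors hp
  have hk : s.factorization p ≠ 0 := by
    rwa [← Finsupp.mem_support_iff, Nat.support_factorization]
  have hcalc : ((hfun d) * (zeta : ArithmeticFunction ℕ)) (p ^ s.factorization p)
      = 1 + hfun d p := by
    rw [coe_mul_zeta_apply, Nat.sum_divisors_prime_pow hpp]
    rw [Finset.sum_range_succ']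
    have hone : (∑ i ∈ Finset.range (s.factorization p), hfun d (p ^ (i + 1)))
        = hfun d p := by
      rw [Finset.sum_eq_single_of_mem 0 (Finset.mem_range.mpr (by omega))]
      · rw [pow_one]
      · intro i _ hi
        rw [hfun_apply, moebius_apply_prime_pow hpp (by omega),
          if_neg (show ¬(i + 1 = 1) by omega)]
        simp
    rw [hone, pow_zero]
    have h1 : hfun d 1 = 1 := (hfun_mult d).1
    rw [h1, add_comm]
  rw [hcalc, hfun_apply]
  by_cases hpd : p ∣ d
  · rw [if_neg (fun h => (hpp.coprime_iff_not_dvd.mp h) hpd),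
      if_neg (not_not_intro hpd), add_zero]
  · rw [if_pos (hpp.coprime_iff_not_dvd.mpr hpd), if_pos hpd,
      moebius_apply_prime hpp]
    push_cast
    ring

lemma minv (f : ℕ → ℂ) : ∀ n > 0, ∑ d ∈ n.divisors,
    (∑ e ∈ d.divisors, (moebius e : ℂ) * f (d / e)) = f n := by
  rw [ArithmeticFunction.sum_eq_iff_sum_mul_moebius_eq]
  intro n _
  rw [← Nat.sum_divisorsAntidiagonal (fun e c => (moebius e : ℂ) * f c)]

lemma musum (n : ℕ) : ∑ e ∈ n.divisors, (moebius e : ℂ) = if n = 1 then 1 else 0 := by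
  have h := congrFun (congrArg DFunLike.coe
    (ArithmeticFunction.coe_moebius_mul_coe_zeta (R := ℂ))) n
  rw [coe_mul_zeta_apply, one_apply] at h
  simpa using h

theorem menon_type_general_f (f : ℕ → ℂ) (m r s : ℕ) (hm : 0 < m) (hr : 0 < r) (hs : 0 < s)
    (hmr : m ∣ r) (hsr : s ∣ r) :
    ∑ a ∈ (Finset.Icc 1 r).filter (fun a => Nat.gcd a s = 1), f (Nat.gcd (a - 1) m)
      = r * ∑ d ∈ m.divisors,
          ((∑ e ∈ d.divisors, (ArithmeticFunction.moebius e : ℂ) * f (d / e)) / d) *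
            ∏ p ∈ s.primeFactors.filter (fun p => ¬ p ∣ d), (1 - 1 / (p : ℂ)) := by
  classical
  set g : ℕ → ℂ := fun d => ∑ e ∈ d.divisors, (moebius e : ℂ) * f (d / e) with hg
  set A : Finset ℕ := (Finset.Icc 1 r).filter (fun a => Nat.gcd a s = 1) with hA
  have hm0 : m ≠ 0 := hm.ne'
  have hs0 : s ≠ 0 := hs.ne'
  -- Step 1: Möbius inversion pointwise
  have step1 : ∑ a ∈ A, f (Nat.gcd (a - 1) m)
      = ∑ a ∈ A, ∑ d ∈ (Nat.gcd (a - 1) m).divisors, g d :=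
    Finset.sum_congr rfl fun a _ =>
      (minv f _ (Nat.gcd_pos_of_pos_right _ hm)).symm
  -- Step 2: swap sums
  have step2 : ∑ a ∈ A, ∑ d ∈ (Nat.gcd (a - 1) m).divisors, g d
      = ∑ d ∈ m.divisors, ∑ a ∈ A.filter (fun a => d ∣ a - 1), g d := by
    apply Finset.sum_comm'
    intro a d
    simp only [Nat.mem_divisors, Nat.dvd_gcd_iff, Finset.mem_filter]
    constructor
    · rintro ⟨ha, ⟨h1, h2⟩, _⟩
      exact ⟨⟨ha, h1⟩, h2, hm0⟩
    · rintro ⟨⟨ha, h1⟩, h2, _⟩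
      refine ⟨ha, ⟨h1, h2⟩, ?_⟩
      have := Nat.gcd_pos_of_pos_right (a - 1) hm
      omega
  -- Step 3: the cardinality computation
  have step3 : ∀ d ∈ m.divisors,
      (((A.filter (fun a => d ∣ a - 1)).card : ℂ))
        = (r : ℂ) / d * ∏ p ∈ s.primeFactors.filter (fun p => ¬ p ∣ d), (1 - 1 / (p : ℂ)) := by
    intro d hd
    rw [Nat.mem_divisors] at hd
    have hd0 : 0 < d := Nat.pos_of_dvd_of_pos hd.1 hm
    have hdr : d ∣ r := hd.1.trans hmr
    have hBform : A.filter (fun a => d ∣ a - 1)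
        = ((Finset.Icc 1 r).filter (fun a => d ∣ a - 1)).filter (fun a => Nat.gcd a s = 1) := by
      rw [hA, Finset.filter_filter, Finset.filter_filter]
      exact Finset.filter_congr fun a _ => by tauto
    set B : Finset ℕ := (Finset.Icc 1 r).filter (fun a => d ∣ a - 1) with hB
    have hcard : ((A.filter (fun a => d ∣ a - 1)).card : ℂ)
        = ∑ a ∈ B, (if Nat.gcd a s = 1 then (1 : ℂ) else 0) := by
      rw [hBform, Finset.sum_boole]
    rw [hcard]
    have hind : ∀ a ∈ B, (if Nat.gcd a s = 1 then (1 : ℂ) else 0)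
        = ∑ e ∈ (Nat.gcd a s).divisors, (moebius e : ℂ) := fun a _ => (musum _).symm
    rw [Finset.sum_congr rfl hind]
    -- swap again
    have hswap : ∑ a ∈ B, ∑ e ∈ (Nat.gcd a s).divisors, (moebius e : ℂ)
        = ∑ e ∈ s.divisors, ∑ a ∈ B.filter (fun a => e ∣ a), (moebius e : ℂ) := by
      apply Finset.sum_comm'
      intro a e
      simp only [Nat.mem_divisors, Nat.dvd_gcd_iff, Finset.mem_filter]
      constructor
      · rintro ⟨ha, ⟨h1, h2⟩, _⟩
        exact ⟨⟨ha, h1⟩, h2, hs0⟩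
      · rintro ⟨⟨ha, h1⟩, h2, _⟩
        refine ⟨ha, ⟨h1, h2⟩, ?_⟩
        have := Nat.gcd_pos_of_pos_right a hs
        omega
    rw [hswap]
    have hterm : ∀ e ∈ s.divisors,
        ∑ a ∈ B.filter (fun a => e ∣ a), (moebius e : ℂ)
          = (r : ℂ) / d * (if Nat.gcd e d = 1 then (moebius e : ℂ) / e else 0) := by
      intro e he
      rw [Nat.mem_divisors] at he
      have he0 : 0 < e := Nat.pos_of_dvd_of_pos he.1 hs
      have her : e ∣ r := he.1.trans hsr
      rw [Finset.sum_const, nsmul_eq_mul]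
      have hBB : B.filter (fun a => e ∣ a)
          = (Finset.Icc 1 r).filter (fun a => d ∣ a - 1 ∧ e ∣ a) := by
        rw [hB, Finset.filter_filter]
      rw [hBB]
      by_cases hco : Nat.Coprime d e
      · rw [count_pair hdr her hd0 he0 hco]
        rw [if_pos ((Nat.coprime_comm).mp hco)]
        have hder : d * e ∣ r := Nat.Coprime.mul_dvd_of_dvd_of_dvd hco hdr her
        rw [Nat.cast_div hder (Nat.cast_ne_zero.mpr (Nat.mul_ne_zero hd0.ne' he0.ne'))]
        have hd0' : (d : ℂ) ≠ 0 := Nat.cast_ne_zero.mpr hd0.ne'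
        have he0' : (e : ℂ) ≠ 0 := Nat.cast_ne_zero.mpr he0.ne'
        push_cast
        field_simp
      · rw [count_pair_zero hco, if_neg (fun h => hco ((Nat.coprime_comm).mp h))]
        simp
    rw [Finset.sum_congr rfl hterm, ← Finset.mul_sum, key5 d hs0]
  -- assemble
  rw [step1, step2]
  rw [Finset.mul_sum]
  apply Finset.sum_congr rfl
  intro d hd
  rw [Finset.sum_const, nsmul_eq_mul, step3 d hd]
  ring
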